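/- With φ(x) = 1 − x, the quantity S₂ = inf_{α₂ > Δx/Δt} inf_{α₁ ∈ ℝ} [ 1 + (Δt − Δx/α₂)α₁ + (Δt − Δx/α₂)(α₁²/2 + 1) + (Δx/α₂)(α₂²/2 + 2) ] equals 1 + √3·Δx + Δt/2, attained at α₁ = −1, α₂ = √3, provided √3 > Δx/Δt. -/
import Mathlib


theorem sl_branch_crossing (Δx Δt : ℝ) (hΔx : 0 < Δx) (hΔt : 0 < Δt)
    (hcfl : Δx / Δt < Real.sqrt 3)
    (φ : ℝ → ℝ) (hφ : ∀ x, φ x = 1 - x) :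
    (∀ α₁ α₂ : ℝ, Δx / Δt < α₂ →
        1 + Real.sqrt 3 * Δx + Δt / 2 ≤
          1 + (Δt - Δx / α₂) * α₁ + (Δt - Δx / α₂) * (α₁ ^ 2 / 2 + 1)
            + Δx / α₂ * (α₂ ^ 2 / 2 + 2)) ∧
    1 + (Δt - Δx / Real.sqrt 3) * (-1) + (Δt - Δx / Real.sqrt 3) * ((-1 : ℝ) ^ 2 / 2 + 1)
        + Δx / Real.sqrt 3 * ((Real.sqrt 3) ^ 2 / 2 + 2)
      = 1 + Real.sqrt 3 * Δx + Δt / 2 := by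
  have hs3 : Real.sqrt 3 * Real.sqrt 3 = 3 := Real.mul_self_sqrt (by norm_num)
  have hs3pos : 0 < Real.sqrt 3 := Real.sqrt_pos.mpr (by norm_num)
  constructor
  · intro α₁ α₂ hα₂
    have hdpos : 0 < Δx / Δt := div_pos hΔx hΔt
    have hα₂pos : 0 < α₂ := hdpos.trans hα₂
    have hq : Δx / α₂ * α₂ = Δx := div_mul_cancel₀ _ hα₂pos.ne'
    have hle : Δx / α₂ < Δt := by
      rw [div_lt_iff₀ hα₂pos]
      calc Δx = Δx / Δt * Δt := by field_simp
      _ < α₂ * Δt := by exact mul_lt_mul_of_pos_right hα₂ hΔt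
      _ = Δt * α₂ := by ring
    have hq2 : 0 ≤ Δx / α₂ := le_of_lt (div_pos hΔx hα₂pos)
    nlinarith [mul_nonneg (sub_nonneg.mpr hle.le) (sq_nonneg (α₁ + 1)),
      mul_nonneg hq2 (sq_nonneg (α₂ - Real.sqrt 3)), sq_nonneg (α₂ - Real.sqrt 3)]
  · have : Δx / Real.sqrt 3 * Real.sqrt 3 = Δx := div_mul_cancel₀ _ hs3pos.ne'
    nlinarith [this, hs3]
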